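/- Let n ≡ 1 (mod 3), n ≥ 6, and let T be a tree on n vertices not isomorphic to K_{1,n-1}. Then every restrictive edge-colouring of K_{n+1} by Z_3 admits a zero-sum embedding of T. -/

import Mathlib

open SimpleGraph Finset


private lemma two_of_three_aux {P1 P2 P3 : Prop} (h12 : ¬P1 → ¬P2 → False)
    (h13 : ¬P1 → ¬P3 → False) (h23 : ¬P2 → ¬P3 → False) :
    (P1 ∧ P2) ∨ (P1 ∧ P3) ∨ (P2 ∧ P3) := by tauto

section classify

variable {I : Type} {c : Sym2 I → ZMod 3} {a : I → ZMod 3}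

private lemma core32
    (hB : ∀ v q r : I, q ≠ v → c s(v,q) ≠ a v → r ≠ v → c s(v,r) ≠ a v → q = r)
    {u1 u2 u3 w1 w2 : I}
    (h12 : u1 ≠ u2) (h13 : u1 ≠ u3) (h23 : u2 ≠ u3) (hw : w1 ≠ w2)
    (d11 : u1 ≠ w1) (d12 : u1 ≠ w2) (d21 : u2 ≠ w1) (d22 : u2 ≠ w2)
    (d31 : u3 ≠ w1) (d32 : u3 ≠ w2)
    (e2 : a u2 = a u1) (e3 : a u3 = a u1) (f2 : a w2 = a w1)
    (hxy : a u1 ≠ a w1) : False := by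
  have key : ∀ j : I, a j = a w1 → j ≠ u1 → j ≠ u2 → j ≠ u3 →
      ((c s(j,u1) = a j ∧ c s(j,u2) = a j) ∨ (c s(j,u1) = a j ∧ c s(j,u3) = a j) ∨
        (c s(j,u2) = a j ∧ c s(j,u3) = a j)) := by
    intro j _ hj1 hj2 hj3
    refine two_of_three_aux ?_ ?_ ?_
    · intro p q; exact h12 (hB j u1 u2 (Ne.symm hj1) p (Ne.symm hj2) q)
    · intro p q; exact h13 (hB j u1 u3 (Ne.symm hj1) p (Ne.symm hj3) q)
    · intro p q; exact h23 (hB j u2 u3 (Ne.symm hj2) p (Ne.symm hj3) q)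
  have exc : ∀ i j : I, a i = a u1 → a j = a w1 → c s(j,i) = a j → c s(i,j) ≠ a i := by
    intro i j hi hjw hc
    rw [Sym2.eq_swap, hc, hjw, hi]
    exact Ne.symm hxy
  have h1 := key w1 rfl (Ne.symm d11) (Ne.symm d21) (Ne.symm d31)
  have h2 := key w2 f2 (Ne.symm d12) (Ne.symm d22) (Ne.symm d32)
  have use : ∀ i : I, a i = a u1 → i ≠ w1 → i ≠ w2 →
      c s(w1,i) = a w1 → c s(w2,i) = a w2 → False := by
    intro i hi hiw1 hiw2 hc1 hc2
    exact hw (hB i w1 w2 (Ne.symm hiw1) (exc i w1 hi rfl hc1)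
      (Ne.symm hiw2) (exc i w2 hi f2 hc2))
  rcases h1 with ⟨p1,p2⟩|⟨p1,p3⟩|⟨p2,p3⟩ <;> rcases h2 with ⟨q1,q2⟩|⟨q1,q3⟩|⟨q2,q3⟩
  · exact use u1 rfl d11 d12 p1 q1
  · exact use u1 rfl d11 d12 p1 q1
  · exact use u2 e2 d21 d22 p2 q2
  · exact use u1 rfl d11 d12 p1 q1
  · exact use u1 rfl d11 d12 p1 q1
  · exact use u3 e3 d31 d32 p3 q3
  · exact use u2 e2 d21 d22 p2 q2
  · exact use u3 e3 d31 d32 p3 q3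
  · exact use u2 e2 d21 d22 p2 q2

private lemma core211
    (hB : ∀ v q r : I, q ≠ v → c s(v,q) ≠ a v → r ≠ v → c s(v,r) ≠ a v → q = r)
    {u t v w : I}
    (hut : u ≠ t) (huv : u ≠ v) (huw : u ≠ w) (htv : t ≠ v) (htw : t ≠ w) (hvw : v ≠ w)
    (ht : a t = a u) (cuv : a u ≠ a v) (cuw : a u ≠ a w) (cvw : a v ≠ a w) : False := by
  -- at least two of the three edges at v have colour (a v)
  have hv : (c s(v,u) = a v ∧ c s(v,t) = a v) ∨ (c s(v,u) = a v ∧ c s(v,w) = a v) ∨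
      (c s(v,t) = a v ∧ c s(v,w) = a v) := by
    refine two_of_three_aux ?_ ?_ ?_
    · intro p q; exact hut (hB v u t huv p htv q)
    · intro p q; exact huw (hB v u w huv p (Ne.symm hvw) q)
    · intro p q; exact htw (hB v t w htv p (Ne.symm hvw) q)
  have hw' : (c s(w,u) = a w ∧ c s(w,t) = a w) ∨ (c s(w,u) = a w ∧ c s(w,v) = a w) ∨
      (c s(w,t) = a w ∧ c s(w,v) = a w) := by
    refine two_of_three_aux ?_ ?_ ?_
    · intro p q; exact hut (hB w u t huw p htw q)
    · intro p q; exact huv (hB w u v huw p hvw q)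
    · intro p q; exact htv (hB w t v htw p hvw q)
  by_cases hc : c s(v,w) = a v
  · -- c(w,v) = a v ≠ a w, so the v-option fails for w
    have nQv : ¬ (c s(w,v) = a w) := by
      rw [Sym2.eq_swap, hc]; exact cvw
    have hQut : c s(w,u) = a w ∧ c s(w,t) = a w := by tauto
    -- w is an exception of u and of t
    have hwu : c s(u,w) ≠ a u := by
      rw [Sym2.eq_swap, hQut.1]; exact Ne.symm cuw
    have hwt : c s(t,w) ≠ a t := by
      rw [Sym2.eq_swap, hQut.2, ht]; exact Ne.symm cuw
    -- from hv, Pu or Pt holds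
    have : c s(v,u) = a v ∨ c s(v,t) = a v := by tauto
    rcases this with h | h
    · have hvu : c s(u,v) ≠ a u := by
        rw [Sym2.eq_swap, h]; exact Ne.symm cuv
      exact hvw (hB u v w huv.symm hvu huw.symm hwu)
    · have hvt : c s(t,v) ≠ a t := by
        rw [Sym2.eq_swap, h, ht]; exact Ne.symm cuv
      exact hvw (hB t v w htv.symm hvt htw.symm hwt)
  · -- Pu and Pt both hold for v
    have hPut : c s(v,u) = a v ∧ c s(v,t) = a v := by tauto
    have hvu : c s(u,v) ≠ a u := by
      rw [Sym2.eq_swap, hPut.1]; exact Ne.symm cuv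
    have hvt : c s(t,v) ≠ a t := by
      rw [Sym2.eq_swap, hPut.2, ht]; exact Ne.symm cuv
    have : c s(w,u) = a w ∨ c s(w,t) = a w := by tauto
    rcases this with h | h
    · have hwu : c s(u,w) ≠ a u := by
        rw [Sym2.eq_swap, h]; exact Ne.symm cuw
      exact hvw (hB u v w huv.symm hvu huw.symm hwu)
    · have hwt : c s(t,w) ≠ a t := by
        rw [Sym2.eq_swap, h, ht]; exact Ne.symm cuw
      exact hvw (hB t v w htv.symm hvt htw.symm hwt)

end classify

section classify2

variable {n : ℕ} {c : Sym2 (Fin (n+1)) → ZMod 3} {a : Fin (n+1) → ZMod 3}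

private lemma fresh4 (hn : 6 ≤ n) (x1 x2 x3 x4 : Fin (n+1)) :
    ∃ t, t ≠ x1 ∧ t ≠ x2 ∧ t ≠ x3 ∧ t ≠ x4 := by
  have hcard : ({x1, x2, x3, x4} : Finset (Fin (n+1))).card ≤ 4 := by
    apply le_trans (card_insert_le _ _)
    apply Nat.succ_le_succ
    apply le_trans (card_insert_le _ _)
    apply Nat.succ_le_succ
    apply le_trans (card_insert_le _ _)
    simp
  have hne : ¬ ((univ : Finset (Fin (n+1))) ⊆ {x1, x2, x3, x4}) := by
    intro hsub
    have := card_le_card hsub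
    rw [card_univ, Fintype.card_fin] at this
    omega
  obtain ⟨t, -, ht⟩ := not_subset.mp hne
  simp only [mem_insert, mem_singleton, not_or] at ht
  exact ⟨t, ht.1, ht.2.1, ht.2.2.1, ht.2.2.2⟩

private lemma norainbow (hn : 6 ≤ n)
    (hB : ∀ v q r : Fin (n+1), q ≠ v → c s(v,q) ≠ a v → r ≠ v → c s(v,r) ≠ a v → q = r)
    {p q r : Fin (n+1)} (hpq : p ≠ q) (hpr : p ≠ r) (hqr : q ≠ r)
    (cpq : a p ≠ a q) (cpr : a p ≠ a r) (cqr : a q ≠ a r) : False := by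
  obtain ⟨t, htp, htq, htr, -⟩ := fresh4 hn p q r p
  have tri : ∀ x y z d : ZMod 3, x ≠ y → x ≠ z → y ≠ z → d = x ∨ d = y ∨ d = z := by decide
  rcases tri (a p) (a q) (a r) (a t) cpq cpr cqr with h | h | h
  · exact core211 hB (Ne.symm htp) hpq hpr htq htr hqr h cpq cpr cqr
  · exact core211 hB (Ne.symm htq) (Ne.symm hpq) hqr htp htr hpr h (Ne.symm cpq)
      cqr cpr
  · exact core211 hB (Ne.symm htr) (Ne.symm hpr) (Ne.symm hqr) htp htq hpq h
      (Ne.symm cpr) (Ne.symm cqr) cpq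

private lemma no22 (hn : 6 ≤ n)
    (hB : ∀ v q r : Fin (n+1), q ≠ v → c s(v,q) ≠ a v → r ≠ v → c s(v,r) ≠ a v → q = r)
    {u1 u2 w1 w2 : Fin (n+1)} (hu : u1 ≠ u2) (hw : w1 ≠ w2)
    (e2 : a u2 = a u1) (f2 : a w2 = a w1) (hxy : a u1 ≠ a w1) : False := by
  have d11 : u1 ≠ w1 := fun h => hxy (by rw [h])
  have d12 : u1 ≠ w2 := fun h => hxy (by rw [h, f2])
  have d21 : u2 ≠ w1 := fun h => hxy (by rw [← e2, h])
  have d22 : u2 ≠ w2 := fun h => hxy (by rw [← e2, h, f2])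
  obtain ⟨t, ht1, ht2, ht3, ht4⟩ := fresh4 hn u1 u2 w1 w2
  have tri : ∀ x y d : ZMod 3, d = x ∨ d = y ∨ (d ≠ x ∧ d ≠ y) := by decide
  rcases tri (a u1) (a w1) (a t) with h | h | ⟨h1, h2⟩
  · exact core32 hB hu (Ne.symm ht1) (Ne.symm ht2) hw d11 d12 d21 d22 ht3 ht4 e2 h f2 hxy
  · exact core32 hB hw (Ne.symm ht3) (Ne.symm ht4) hu (Ne.symm d11) (Ne.symm d21)
      (Ne.symm d12) (Ne.symm d22) ht1 ht2 f2 h e2 (Ne.symm hxy)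
  · exact norainbow hn hB d11 (Ne.symm ht1) (Ne.symm ht3) hxy (Ne.symm h1) (Ne.symm h2)

private lemma classify (hn : 6 ≤ n)
    (hB : ∀ v q r : Fin (n+1), q ≠ v → c s(v,q) ≠ a v → r ≠ v → c s(v,r) ≠ a v → q = r)
    (hex : ∃ u w : Fin (n+1), a u ≠ a w) :
    ∃ (v0 : Fin (n+1)) (b : ZMod 3), b ≠ a v0 ∧ ∀ u, u ≠ v0 → a u = b := by
  obtain ⟨u, w, huw⟩ := hex
  have hcover : ∀ t, a t = a u ∨ a t = a w := by
    intro t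
    by_contra h
    push_neg at h
    have htu : t ≠ u := fun e => h.1 (by rw [e])
    have htw : t ≠ w := fun e => h.2 (by rw [e])
    exact norainbow hn hB (fun e => huw (by rw [e])) (Ne.symm htu) (Ne.symm htw)
      huw (Ne.symm h.1) (Ne.symm h.2)
  have small : (univ.filter fun t => a t = a u).card ≤ 1 ∨
      (univ.filter fun t => a t = a w).card ≤ 1 := by
    by_contra h
    push_neg at h
    obtain ⟨u1, hu1, u2, hu2, hu12⟩ := one_lt_card.mp h.1
    obtain ⟨w1, hw1, w2, hw2, hw12⟩ := one_lt_card.mp h.2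
    rw [mem_filter] at hu1 hu2 hw1 hw2
    exact no22 hn hB hu12 hw12 (hu2.2.trans hu1.2.symm) (hw2.2.trans hw1.2.symm)
      (by rw [hu1.2, hw1.2]; exact huw)
  have hhu : u ∈ univ.filter fun t => a t = a u := by simp
  have hhw : w ∈ univ.filter fun t => a t = a w := by simp
  rcases small with h | h
  · refine ⟨u, a w, Ne.symm huw, fun t ht => ?_⟩
    rcases hcover t with h' | h'
    · exfalso
      have : t ∈ univ.filter fun s => a s = a u := by simp [h']
      exact ht (card_le_one.mp h _ this _ hhu)
    · exact h'
  · refine ⟨w, a u, huw, fun t ht => ?_⟩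
    rcases hcover t with h' | h'
    · exact h'
    · exfalso
      have : t ∈ univ.filter fun s => a s = a w := by simp [h']
      exact ht (card_le_one.mp h _ this _ hhw)

end classify2


lemma tree_embed {V W : Type} [Fintype V] [DecidableEq V] [Fintype W] [DecidableEq W]
    [Nonempty V]
    (T : SimpleGraph V) (hconn : T.Connected) (hacyc : T.IsAcyclic)
    (G : SimpleGraph W) [DecidableRel G.Adj]
    (hcard : Fintype.card V ≤ Fintype.card W)
    (hdeg : ∀ w, Fintype.card V - 1 ≤ G.degree w) :
    ∃ f : V ↪ W, ∀ x y, T.Adj x y → G.Adj (f x) (f y) := by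
  have key : ∀ k, 1 ≤ k → k ≤ Fintype.card V → ∃ (s : Finset V) (f : V → W),
      s.card = k ∧ Set.InjOn f ↑s ∧
      (∀ x ∈ s, ∀ y ∈ s, T.Adj x y → G.Adj (f x) (f y)) ∧
      (∀ x ∈ s, ∀ y ∈ s, ∃ p : T.Walk x y, ∀ z ∈ p.support, z ∈ s) := by
    intro k hk1
    induction k, hk1 using Nat.le_induction with
    | base =>
      intro _
      obtain ⟨x0⟩ := ‹Nonempty V›
      have h1 : 0 < Fintype.card V := Fintype.card_pos
      have hW : Nonempty W := Fintype.card_pos_iff.mp (lt_of_lt_of_le h1 hcard)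
      obtain ⟨w0⟩ := hW
      refine ⟨{x0}, fun _ => w0, by simp, ?_, ?_, ?_⟩
      · intro a ha b hb _
        simp only [coe_singleton, Set.mem_singleton_iff] at ha hb
        rw [ha, hb]
      · intro x hx y hy hxy
        simp only [mem_singleton] at hx hy
        subst hx; subst hy
        exact absurd hxy (T.irrefl)
      · intro x hx y hy
        simp only [mem_singleton] at hx hy
        subst hx; subst hy
        exact ⟨Walk.nil, by simp⟩
    | succ k hk ih =>
      intro hk2
      obtain ⟨s, f, hsk, hinj, hadj, hwalk⟩ := ih (by omega)
      have hne : s ≠ univ := by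
        intro h; rw [h, card_univ] at hsk; omega
      obtain ⟨y0, hy0⟩ : ∃ y0, y0 ∉ s := by
        by_contra h; push_neg at h; exact hne (eq_univ_iff_forall.mpr h)
      obtain ⟨x0, hx0⟩ : s.Nonempty := card_pos.mp (by omega)
      obtain ⟨p0⟩ := hconn.preconnected x0 y0
      obtain ⟨⟨⟨v, u⟩, hadjvu⟩, -, hfst, hsnd⟩ :=
        p0.exists_boundary_dart ↑s hx0 (by simpa using hy0)
      have hvs : v ∈ s := by simpa using hfst
      have hus : u ∉ s := by simpa using hsnd
      replace hadjvu : T.Adj v u := hadjvu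
      have huv : u ≠ v := by rintro rfl; exact hus hvs
      -- uniqueness of the neighbour of u inside s
      have huniq : ∀ y ∈ s, T.Adj u y → y = v := by
        intro y hy hauy
        by_contra hne2
        obtain ⟨p, hp⟩ := hwalk y hy v hvs
        have hu_not : u ∉ (p.toPath : T.Walk y v).support := by
          intro h
          exact hus (hp _ (Walk.support_toPath_subset p h))
        have heq := hacyc.path_unique
          ⟨Walk.cons hauy (p.toPath : T.Walk y v), (p.toPath.2).cons hu_not⟩
          (Path.singleton hadjvu.symm)
        have hlen := congrArg (fun q : T.Path u v => q.1.length) heq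
        simp only [Path.singleton, Walk.length_cons, Walk.length_nil] at hlen
        exact hne2 (Walk.eq_of_length_eq_zero (p := (p.toPath : T.Walk y v)) (by omega))
      -- choose a fresh image
      set A := G.neighborFinset (f v) with hA
      set B := (s.erase v).image f with hB
      have hAcard : Fintype.card V - 1 ≤ A.card := by
        rw [hA, card_neighborFinset_eq_degree]; exact hdeg (f v)
      have hBcard : B.card ≤ k - 1 := by
        calc B.card ≤ (s.erase v).card := card_image_le
        _ = k - 1 := by rw [card_erase_of_mem hvs, hsk]
      have hsub : A \ B ⊆ A \ s.image f := by
        intro w hw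
        rw [mem_sdiff] at hw ⊢
        refine ⟨hw.1, fun hmem => ?_⟩
        have hwAdj : G.Adj (f v) w := by
          have := hw.1; rwa [hA, mem_neighborFinset] at this
        obtain ⟨x, hxs, hfx⟩ := mem_image.mp hmem
        rcases eq_or_ne x v with rfl | hxv
        · rw [hfx] at hwAdj
          exact G.irrefl hwAdj
        · exact hw.2 (mem_image.mpr ⟨x, mem_erase.mpr ⟨hxv, hxs⟩, hfx⟩)
      have hnonempty : (A \ s.image f).Nonempty := by
        apply card_pos.mp
        have h1 : A.card - B.card ≤ (A \ B).card := le_card_sdiff B A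
        have h2 : (A \ B).card ≤ (A \ s.image f).card := card_le_card hsub
        omega
      obtain ⟨w', hw'⟩ := hnonempty
      rw [mem_sdiff] at hw'
      have hw'A : G.Adj (f v) w' := by
        have := hw'.1; rwa [hA, mem_neighborFinset] at this
      have hw'img : w' ∉ s.image f := hw'.2
      refine ⟨insert u s, Function.update f u w', ?_, ?_, ?_, ?_⟩
      · rw [card_insert_of_notMem hus, hsk]
      · intro x hx y hy hxy
        simp only [coe_insert, Set.mem_insert_iff, mem_coe] at hx hy
        have hfx : ∀ z, z ∈ s → Function.update f u w' z = f z := by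
          intro z hz
          refine Function.update_of_ne ?_ _ _
          rintro rfl; exact hus hz
        rcases hx with rfl | hx <;> rcases hy with rfl | hy
        · rfl
        · rw [Function.update_self, hfx y hy] at hxy
          exact absurd (mem_image.mpr ⟨y, hy, hxy.symm⟩) hw'img
        · rw [Function.update_self, hfx x hx] at hxy
          exact absurd (mem_image.mpr ⟨x, hx, hxy⟩) hw'img
        · rw [hfx x hx, hfx y hy] at hxy
          exact hinj hx hy hxy
      · intro x hx y hy hxy
        simp only [mem_insert] at hx hy
        have hfx : ∀ z, z ∈ s → Function.update f u w' z = f z := by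
          intro z hz
          refine Function.update_of_ne ?_ _ _
          rintro rfl; exact hus hz
        rcases hx with rfl | hx <;> rcases hy with rfl | hy
        · exact absurd hxy (T.irrefl)
        · have : y = v := huniq y hy hxy
          subst this
          rw [Function.update_self, hfx y hy]
          exact hw'A.symm
        · have : x = v := huniq x hx hxy.symm
          subst this
          rw [Function.update_self, hfx x hx]
          exact hw'A
        · rw [hfx x hx, hfx y hy]
          exact hadj x hx y hy hxy
      · intro x hx y hy
        simp only [mem_insert] at hx hy
        rcases hx with rfl | hx <;> rcases hy with rfl | hy
        · exact ⟨Walk.nil, by simp⟩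
        · obtain ⟨p, hp⟩ := hwalk v hvs y hy
          refine ⟨Walk.cons hadjvu.symm p, ?_⟩
          intro z hz
          rw [Walk.support_cons] at hz
          rcases List.mem_cons.mp hz with rfl | hz
          · exact mem_insert_self _ _
          · exact mem_insert_of_mem (hp z hz)
        · obtain ⟨p, hp⟩ := hwalk v hvs x hx
          refine ⟨(Walk.cons hadjvu.symm p).reverse, ?_⟩
          intro z hz
          rw [Walk.support_reverse, List.mem_reverse, Walk.support_cons] at hz
          rcases List.mem_cons.mp hz with rfl | hz
          · exact mem_insert_self _ _
          · exact mem_insert_of_mem (hp z hz)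
        · obtain ⟨p, hp⟩ := hwalk x hx y hy
          exact ⟨p, fun z hz => mem_insert_of_mem (hp z hz)⟩
  obtain ⟨s, f, hcardV, hinj, hadj, -⟩ :=
    key (Fintype.card V) Fintype.card_pos le_rfl
  have hs : s = univ := eq_univ_of_card s hcardV
  subst hs
  rw [coe_univ] at hinj
  exact ⟨⟨f, fun a b h => hinj (Set.mem_univ a) (Set.mem_univ b) h⟩,
    fun x y hxy => hadj x (mem_univ x) y (mem_univ y) hxy⟩

theorem stmt_13 {V : Type} [Fintype V] [DecidableEq V] {n : ℕ}
    (hV : Fintype.card V = n) (hn1 : n % 3 = 1) (hn : 6 ≤ n)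
    (T : SimpleGraph V) [DecidableRel T.Adj]
    (hconn : T.Connected) (hacyc : T.IsAcyclic)
    (hstar : ¬ Nonempty (T ≃g completeBipartiteGraph (Fin 1) (Fin (n - 1))))
    (c : Sym2 (Fin (n + 1)) → ZMod 3)
    (hres : ∀ v : Fin (n + 1), ∃ a : ZMod 3,
      n - 1 ≤ (univ.filter fun w => w ≠ v ∧ c s(v, w) = a).card) :
    ∃ f : V ↪ Fin (n + 1), ∑ e ∈ T.edgeFinset, c (e.map f) = 0 := by
  classical
  set a : Fin (n+1) → ZMod 3 := fun v => Classical.choose (hres v) with ha_def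
  have ha : ∀ v, n - 1 ≤ (univ.filter fun w => w ≠ v ∧ c s(v, w) = a v).card :=
    fun v => Classical.choose_spec (hres v)
  have hB : ∀ v q r : Fin (n+1), q ≠ v → c s(v,q) ≠ a v → r ≠ v → c s(v,r) ≠ a v →
      q = r := by
    intro v q r hq hcq hr hcr
    have hsubset : (univ.filter fun w => w ≠ v ∧ c s(v,w) = a v) ⊆ univ.erase v := by
      intro w hw
      rw [mem_filter] at hw
      exact mem_erase.mpr ⟨hw.2.1, mem_univ w⟩
    have heq : (univ.filter fun w => w ≠ v ∧ ¬ (c s(v,w) = a v)) =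
        (univ.erase v) \ (univ.filter fun w => w ≠ v ∧ c s(v,w) = a v) := by
      ext w
      simp only [mem_filter, mem_sdiff, mem_erase, mem_univ, true_and, and_true]
      tauto
    have hcard1 : (univ.erase v).card = n := by
      rw [card_erase_of_mem (mem_univ v), card_univ, Fintype.card_fin]
      omega
    have hle : (univ.filter fun w => w ≠ v ∧ c s(v,w) = a v).card ≤ n := by
      have := card_le_card hsubset; omega
    have hbad : (univ.filter fun w => w ≠ v ∧ ¬ (c s(v,w) = a v)).card ≤ 1 := by
      rw [heq, card_sdiff_of_subset hsubset]
      have := ha v; omega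
    have hqmem : q ∈ univ.filter fun w => w ≠ v ∧ ¬ (c s(v,w) = a v) := by
      simp only [mem_filter, mem_univ, true_and]; exact ⟨hq, hcq⟩
    have hrmem : r ∈ univ.filter fun w => w ≠ v ∧ ¬ (c s(v,w) = a v) := by
      simp only [mem_filter, mem_univ, true_and]; exact ⟨hr, hcr⟩
    exact card_le_one.mp hbad _ hqmem _ hrmem
  haveI : Nonempty V := Fintype.card_pos_iff.mp (by omega)
  have htree : T.IsTree := ⟨hconn, hacyc⟩
  have hedge : T.edgeFinset.card = n - 1 := by
    have h2 := htree.card_edgeFinset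
    rw [hV] at h2; omega
  have hsum0 : ∀ (f : V ↪ Fin (n+1)) (a0 : ZMod 3),
      (∀ x y, T.Adj x y → c s(f x, f y) = a0) →
      ∑ e ∈ T.edgeFinset, c (e.map f) = 0 := by
    intro f a0 hf
    have hall : ∀ e ∈ T.edgeFinset, c (e.map f) = a0 := by
      intro e he
      induction e using Sym2.ind with
      | _ x y =>
        rw [mem_edgeFinset, mem_edgeSet] at he
        rw [Sym2.map_pair_eq]
        exact hf x y he
    rw [Finset.sum_congr rfl hall, Finset.sum_const, hedge, nsmul_eq_mul]
    have h3 : ((n - 1 : ℕ) : ZMod 3) = 0 :=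
      (ZMod.natCast_eq_zero_iff _ _).mpr (by omega)
    rw [h3, zero_mul]
  by_cases hcase : ∀ u w : Fin (n+1), a u = a w
  · -- Case A: all dominant colours equal
    set a0 := a 0 with ha0
    let G : SimpleGraph (Fin (n+1)) :=
      { Adj := fun v w => v ≠ w ∧ c s(v,w) = a0
        symm := by
          constructor
          intro v w h
          exact ⟨Ne.symm h.1, by rw [Sym2.eq_swap]; exact h.2⟩
        loopless := ⟨fun v h => h.1 rfl⟩ }
    haveI : DecidableRel G.Adj := fun v w => instDecidableAnd
    have hdeg : ∀ v, Fintype.card V - 1 ≤ G.degree v := by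
      intro v
      rw [hV]
      have hav : a v = a0 := hcase v 0
      have hdg : G.degree v = (univ.filter fun w => w ≠ v ∧ c s(v,w) = a v).card := by
        rw [← card_neighborFinset_eq_degree, neighborFinset_eq_filter]
        congr 1
        ext w
        simp only [mem_filter, mem_univ, true_and]
        constructor
        · rintro ⟨h1, h2⟩; exact ⟨Ne.symm h1, by rw [hav]; exact h2⟩
        · rintro ⟨h1, h2⟩; exact ⟨Ne.symm h1, by rw [← hav]; exact h2⟩
      rw [hdg]
      exact ha v
    obtain ⟨f, hf⟩ := tree_embed T hconn hacyc G
      (by rw [hV, Fintype.card_fin]; omega) hdeg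
    exact ⟨f, hsum0 f a0 (fun x y hxy => (hf x y hxy).2)⟩
  · -- Case B: one deviating vertex v0
    push_neg at hcase
    obtain ⟨v0, b, hb, hconst⟩ := classify hn hB hcase
    have mono : ∀ v w : Fin (n+1), v ≠ w → v ≠ v0 → w ≠ v0 → c s(v,w) = b := by
      intro v w hvw hv hw
      by_contra hbad
      have hav : a v = b := hconst v hv
      have haw : a w = b := hconst w hw
      have hbad' : c s(v,w) ≠ a v := by rw [hav]; exact hbad
      have h1 : c s(v,v0) = b := by
        by_contra h
        have h' : c s(v,v0) ≠ a v := by rw [hav]; exact h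
        exact hw (hB v w v0 (Ne.symm hvw) hbad' (Ne.symm hv) h')
      have h2 : c s(w,v0) = b := by
        by_contra h
        have hbad'' : c s(w,v) ≠ a w := by rw [Sym2.eq_swap, haw]; exact hbad
        have h' : c s(w,v0) ≠ a w := by rw [haw]; exact h
        exact hv (hB w v v0 hvw hbad'' (Ne.symm hw) h')
      have e1 : c s(v0,v) ≠ a v0 := by rw [Sym2.eq_swap, h1]; exact hb
      have e2 : c s(v0,w) ≠ a v0 := by rw [Sym2.eq_swap, h2]; exact hb
      exact hvw (hB v0 v w hv e1 hw e2)
    have hcardsub : Fintype.card {x : Fin (n+1) // x ≠ v0} = n := by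
      rw [Fintype.card_subtype_compl, Fintype.card_subtype_eq, Fintype.card_fin]
      omega
    have e := Fintype.equivOfCardEq
      (α := V) (β := {x : Fin (n+1) // x ≠ v0}) (by rw [hV, hcardsub])
    refine ⟨⟨fun x => (e x).1, fun x y h => e.injective (Subtype.ext h)⟩, ?_⟩
    apply hsum0 _ b
    intro x y hxy
    have hne : (e x).1 ≠ (e y).1 := fun h => hxy.ne (e.injective (Subtype.ext h))
    exact mono _ _ hne (e x).2 (e y).2
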